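/- For every finite simple graph G with at least one vertex, the chromatic discrepancy satisfies φ(G) = min { p − f_G(p) : χ(G) ≤ p ≤ |V(G)| }. -/

import Mathlib

open SimpleGraph

/-- `σ` is a proper colouring of `G` with colours in `ℕ`. -/
def IsProperColoring {V : Type*} (G : SimpleGraph V) (σ : V → ℕ) : Prop :=
  ∀ ⦃u v : V⦄, G.Adj u v → σ u ≠ σ v

/-- The chromatic number of `G`, as a natural number. -/
noncomputable def chromNum {V : Type*} (G : SimpleGraph V) : ℕ :=
  sInf {n : ℕ | G.Colorable n}

/-- The discrepancy `φ_σ(G)` of a proper colouring `σ` of `G`: the maximum, over all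
induced subgraphs `G[S]` of `G`, of `|σ(S)| - χ(G[S])`. -/
noncomputable def colDisc {V : Type*} (G : SimpleGraph V) (σ : V → ℕ) : ℤ :=
  sSup {z : ℤ | ∃ S : Set V, z = ((σ '' S).ncard : ℤ) - (chromNum (G.induce S) : ℤ)}

/-- The chromatic discrepancy `φ(G)`: the minimum of `φ_σ(G)` over all proper
colourings `σ` of `G`. -/
noncomputable def chromDisc {V : Type*} (G : SimpleGraph V) : ℤ :=
  sInf {z : ℤ | ∃ σ : V → ℕ, IsProperColoring G σ ∧ z = colDisc G σ}

/-- `G` is locally `s`-colourable: the closed neighbourhood of every vertex induces an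
`s`-colourable subgraph. -/
def LocallyColorable {V : Type*} (G : SimpleGraph V) (s : ℕ) : Prop :=
  ∀ v : V, chromNum (G.induce (insert v (G.neighborSet v))) ≤ s

/-- The set of vertices at distance at most `r` from `v` in `G`. -/
def ballSet {V : Type*} (G : SimpleGraph V) (v : V) (r : ℕ) : Set V :=
  {u : V | ∃ w : G.Walk v u, w.length ≤ r}

/-- `G` is `r`-locally `s`-colourable: every ball of radius `r` induces an
`s`-colourable subgraph. -/
def RLocallyColorable {V : Type*} (G : SimpleGraph V) (r s : ℕ) : Prop :=
  ∀ v : V, chromNum (G.induce (ballSet G v r)) ≤ s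

/-- `G` contains no cycle of length exactly `n` as a (not necessarily induced) subgraph. -/
def CycleLenFree {V : Type*} (G : SimpleGraph V) (n : ℕ) : Prop :=
  ∀ (v : V) (w : G.Walk v v), w.IsCycle → w.length ≠ n

/-- `H` is `k`-degenerate: every non-empty (induced) subgraph contains a vertex of
degree at most `k` in it. -/
def Degenerate {α : Type*} (H : SimpleGraph α) (k : ℕ) : Prop :=
  ∀ S : Set α, S.Nonempty → ∃ a ∈ S, {b | b ∈ S ∧ H.Adj a b}.ncard ≤ k

/-- `G` is co-locally `s`-colourable: for all vertices `u ≠ v`,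
`χ(G[{u} ∪ N(v)]) ≤ s`. -/
def CoLocallyColorable {V : Type*} (G : SimpleGraph V) (s : ℕ) : Prop :=
  ∀ v u : V, u ≠ v → chromNum (G.induce (insert u (G.neighborSet v))) ≤ s

/-- The minimum of `χ(G[X])` over all subsets `X ⊆ V(G)` spanning exactly `p` colours
of `σ` (a rainbow cover of `σ` when `σ` uses exactly `p` colours). -/
noncomputable def minRainbowChrom {V : Type*} (G : SimpleGraph V) (σ : V → ℕ) (p : ℕ) : ℕ :=
  sInf {c : ℕ | ∃ X : Set V, (σ '' X).ncard = p ∧ c = chromNum (G.induce X)}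

/-- `f_G(p)`: the maximum, over all proper colourings `σ` of `G` using exactly `p`
colours, of the minimum chromatic number of a rainbow cover of `σ`. -/
noncomputable def fG {V : Type*} (G : SimpleGraph V) (p : ℕ) : ℕ :=
  sSup {m : ℕ | ∃ σ : V → ℕ, IsProperColoring G σ ∧ (σ '' Set.univ).ncard = p ∧
    m = minRainbowChrom G σ p}

/-- The closed neighbourhood `N[X]` of a set `X` of vertices. -/
def closedNbhd {V : Type*} (G : SimpleGraph V) (X : Set V) : Set V :=
  X ∪ {u : V | ∃ x ∈ X, G.Adj x u}

set_option linter.unusedSectionVars false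

section helpers
variable {W : Type*} [Finite W]

lemma chromNum_le_of_colorable {H : SimpleGraph W} {n : ℕ} (h : H.Colorable n) :
    chromNum H ≤ n := Nat.sInf_le h

lemma colorable_ncard_image (H : SimpleGraph W) (c : W → ℕ)
    (hc : ∀ ⦃u v : W⦄, H.Adj u v → c u ≠ c v) :
    H.Colorable ((c '' Set.univ).ncard) := by
  have hfin : (c '' Set.univ).Finite := (Set.finite_univ).image c
  haveI := hfin.to_subtype
  have e : ↥(c '' Set.univ) ≃ Fin ((c '' Set.univ).ncard) :=
    Finite.equivFinOfCardEq (Nat.card_coe_set_eq _)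
  exact ⟨SimpleGraph.Coloring.mk
    (fun v => e ⟨c v, ⟨v, Set.mem_univ v, rfl⟩⟩)
    (fun {u v} hadj h => hc hadj (by simpa using congrArg Subtype.val (e.injective h)))⟩

lemma chromNum_le_ncard_image (H : SimpleGraph W) (c : W → ℕ)
    (hc : ∀ ⦃u v : W⦄, H.Adj u v → c u ≠ c v) :
    chromNum H ≤ (c '' Set.univ).ncard :=
  chromNum_le_of_colorable (colorable_ncard_image H c hc)

lemma chromNum_colorable (H : SimpleGraph W) : H.Colorable (chromNum H) := by
  cases nonempty_fintype W
  exact Nat.sInf_mem (⟨Fintype.card W, H.colorable_of_fintype⟩ : {n : ℕ | H.Colorable n}.Nonempty)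

end helpers

section V
variable {V : Type*} [Fintype V] (G : SimpleGraph V)

lemma chromNum_induce_le (S : Set V) (σ : V → ℕ) (hσ : IsProperColoring G σ) :
    chromNum (G.induce S) ≤ (σ '' S).ncard := by
  have h := chromNum_le_ncard_image (G.induce S) (fun x => σ x.1)
    (fun u v hadj => hσ hadj)
  have himg : (fun x : S => σ x.1) '' Set.univ = σ '' S := by
    rw [Set.image_univ]; ext y
    simp [Set.mem_image]
  rwa [himg] at h

lemma chromNum_induce_union_le (S T : Set V) :
    chromNum (G.induce (S ∪ T)) ≤ chromNum (G.induce S) + T.ncard := by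
  classical
  set n := chromNum (G.induce S) with hn
  set k := T.ncard with hk
  obtain ⟨C⟩ := chromNum_colorable (G.induce S)
  have e : ↥T ≃ Fin k := Finite.equivFinOfCardEq (Nat.card_coe_set_eq _)
  have hcol : (G.induce (S ∪ T)).Colorable (n + k) := by
    refine ⟨SimpleGraph.Coloring.mk (fun x =>
      if h : x.1 ∈ T then Fin.natAdd n (e ⟨x.1, h⟩)
      else Fin.castAdd k (C ⟨x.1, x.2.resolve_right h⟩)) ?_⟩
    rintro ⟨a, ha⟩ ⟨b, hb⟩ hadj
    have hab : a ≠ b := fun h => (G.loopless.irrefl a (h ▸ hadj)).elim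
    dsimp only
    by_cases hA : a ∈ T <;> by_cases hB : b ∈ T
    · rw [dif_pos hA, dif_pos hB]
      intro h
      have h2 : (e ⟨a, hA⟩ : ℕ) = (e ⟨b, hB⟩ : ℕ) := by
        have := congrArg Fin.val h
        simpa [Fin.coe_natAdd] using this
      have h3 : e ⟨a, hA⟩ = e ⟨b, hB⟩ := Fin.ext h2
      exact hab (congrArg Subtype.val (e.injective h3))
    · rw [dif_pos hA, dif_neg hB]
      intro h
      have := congrArg Fin.val h
      simp only [Fin.coe_natAdd, Fin.coe_castAdd] at this
      have hlt : ((C ⟨b, hb.resolve_right hB⟩) : ℕ) < n := Fin.is_lt _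
      omega
    · rw [dif_neg hA, dif_pos hB]
      intro h
      have := congrArg Fin.val h
      simp only [Fin.coe_natAdd, Fin.coe_castAdd] at this
      have hlt : ((C ⟨a, ha.resolve_right hA⟩) : ℕ) < n := Fin.is_lt _
      omega
    · rw [dif_neg hA, dif_neg hB]
      intro h
      have := congrArg Fin.val h
      simp only [Fin.coe_castAdd] at this
      exact C.valid (by exact hadj) (Fin.ext this)
  exact Nat.sInf_le hcol

lemma exists_proper_ncard_eq {p : ℕ} (hp : chromNum G ≤ p) (hpn : p ≤ Fintype.card V) :
    ∃ σ : V → ℕ, IsProperColoring G σ ∧ (σ '' Set.univ).ncard = p := by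
  classical
  set n := Fintype.card V with hn
  set χ := chromNum G with hχ
  have hχn : χ ≤ n := chromNum_le_of_colorable G.colorable_of_fintype
  obtain ⟨c0⟩ := chromNum_colorable G
  set c : V → ℕ := fun v => (c0 v : ℕ) with hc
  have hcprop : IsProperColoring G c := fun u v hadj h =>
    c0.valid hadj (Fin.ext h)
  have hclt : ∀ v, c v < χ := fun v => (c0 v).is_lt
  set I := c '' Set.univ with hI
  have hIfin : I.Finite := Set.finite_univ.image c
  have hIcard : I.ncard = χ := by
    have h1 : χ ≤ I.ncard := chromNum_le_ncard_image G c hcprop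
    have h2 : I.ncard ≤ χ := by
      have : I = Fin.val '' (c0 '' Set.univ) := by
        rw [← Set.image_comp]; rfl
      rw [this]
      calc (Fin.val '' (c0 '' Set.univ)).ncard ≤ (c0 '' Set.univ).ncard :=
            Set.ncard_image_le (Set.finite_univ.image c0)
        _ ≤ (Set.univ : Set (Fin χ)).ncard :=
            Set.ncard_le_ncard (Set.subset_univ _) Set.finite_univ
        _ = χ := by rw [Set.ncard_univ, Nat.card_eq_fintype_card, Fintype.card_fin]
    omega
  have hrep : ∀ m : ↥I, ∃ v : V, c v = m.1 := by
    rintro ⟨m, hm⟩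
    obtain ⟨v, -, hv⟩ := hm
    exact ⟨v, hv⟩
  choose rep hrepc using hrep
  set R := Set.range rep with hR
  have hcR : c '' R = I := by
    apply Set.Subset.antisymm
    · rintro x ⟨v, ⟨m, rfl⟩, rfl⟩
      rw [hrepc]; exact m.2
    · intro m hm
      exact ⟨rep ⟨m, hm⟩, ⟨⟨m, hm⟩, rfl⟩, hrepc ⟨m, hm⟩⟩
  have hRcard : R.ncard ≤ χ := by
    calc R.ncard = (rep '' Set.univ).ncard := by rw [Set.image_univ]
      _ ≤ (Set.univ : Set ↥I).ncard := Set.ncard_image_le Set.finite_univ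
      _ = Nat.card ↥I := Set.ncard_univ _
      _ = I.ncard := Nat.card_coe_set_eq _
      _ = χ := hIcard
  have hRc : Rᶜ.ncard ≥ p - χ := by
    have := Set.ncard_add_ncard_compl R
    rw [Nat.card_eq_fintype_card] at this
    omega
  obtain ⟨T, hTR, hTcard⟩ := Set.exists_subset_card_eq hRc
  have e : ↥T ≃ Fin (T.ncard) := Finite.equivFinOfCardEq (Nat.card_coe_set_eq _)
  set σ : V → ℕ := fun v => if h : v ∈ T then n + (e ⟨v, h⟩ : ℕ) else c v with hσ
  have hσT : ∀ v (h : v ∈ T), σ v = n + (e ⟨v, h⟩ : ℕ) := fun v h => dif_pos h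
  have hσN : ∀ v, v ∉ T → σ v = c v := fun v h => dif_neg h
  refine ⟨σ, ?_, ?_⟩
  · intro u v hadj h
    have huv : u ≠ v := hadj.ne
    by_cases hu : u ∈ T <;> by_cases hv : v ∈ T
    · rw [hσT u hu, hσT v hv] at h
      have : e ⟨u, hu⟩ = e ⟨v, hv⟩ := Fin.ext (by omega)
      exact huv (congrArg Subtype.val (e.injective this))
    · rw [hσT u hu, hσN v hv] at h
      have := hclt v; omega
    · rw [hσN u hu, hσT v hv] at h
      have := hclt u; omega
    · rw [hσN u hu, hσN v hv] at h
      exact hcprop hadj h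
  · set F := Set.range (fun t : ↥T => n + (e t : ℕ)) with hF
    have himg : σ '' Set.univ = I ∪ F := by
      apply Set.Subset.antisymm
      · rintro x ⟨v, -, rfl⟩
        by_cases h : v ∈ T
        · exact Or.inr ⟨⟨v, h⟩, (hσT v h).symm⟩
        · exact Or.inl (by rw [hσN v h]; exact ⟨v, Set.mem_univ v, rfl⟩)
      · rintro x (hx | hx)
        · rw [← hcR] at hx
          obtain ⟨v, hvR, rfl⟩ := hx
          have hvT : v ∉ T := fun h => (hTR h) hvR
          exact ⟨v, Set.mem_univ v, (hσN v hvT)⟩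
        · obtain ⟨t, rfl⟩ := hx
          exact ⟨t.1, Set.mem_univ _, by rw [hσT t.1 t.2]⟩
    have hFcard : F.ncard = p - χ := by
      have hinj : Function.Injective (fun t : ↥T => n + (e t : ℕ)) := by
        intro a b h
        exact e.injective (Fin.ext (by simpa using h))
      calc F.ncard = Nat.card ↥T := by
            rw [hF, ← Set.image_univ, Set.ncard_image_of_injective _ hinj, Set.ncard_univ]
        _ = T.ncard := Nat.card_coe_set_eq _
        _ = p - χ := hTcard
    have hdisj : Disjoint I F := by
      rw [Set.disjoint_left]
      rintro x hxI hxF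
      obtain ⟨t, ht⟩ := hxF
      have ht' : n + (e t : ℕ) = x := ht
      obtain ⟨v, -, hv⟩ := hxI
      have := hclt v; omega
    rw [himg, Set.ncard_union_eq hdisj hIfin (Set.finite_range _), hIcard, hFcard]
    omega

/-- Key lemma: for a proper colouring using `q` colours,
`φ_σ(G) = q - minRainbowChrom G σ q`. -/
lemma colDisc_eq_sub (σ : V → ℕ) (hσ : IsProperColoring G σ) :
    colDisc G σ = ((σ '' Set.univ).ncard : ℤ) -
      (minRainbowChrom G σ ((σ '' Set.univ).ncard) : ℤ) := by
  classical
  set q := (σ '' Set.univ).ncard with hq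
  set Q := {c : ℕ | ∃ X : Set V, (σ '' X).ncard = q ∧ c = chromNum (G.induce X)} with hQ
  have hQne : Q.Nonempty := ⟨chromNum (G.induce Set.univ), Set.univ, rfl, rfl⟩
  set g := minRainbowChrom G σ q with hg
  have hgQ : g ∈ Q := Nat.sInf_mem hQne
  obtain ⟨X₀, hX₀q, hX₀⟩ := hgQ
  set Z := {z : ℤ | ∃ S : Set V, z = ((σ '' S).ncard : ℤ) - (chromNum (G.induce S) : ℤ)}
    with hZ
  have hbound : ∀ z ∈ Z, z ≤ (q : ℤ) - (g : ℤ) := by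
    rintro z ⟨S, rfl⟩
    set p' := (σ '' S).ncard with hp'
    have hsub : σ '' S ⊆ σ '' Set.univ := Set.image_mono (Set.subset_univ S)
    have hp'q : p' ≤ q := Set.ncard_le_ncard hsub (Set.finite_univ.image σ)
    set M := (σ '' Set.univ) \ (σ '' S) with hM
    have hMcard : M.ncard = q - p' := Set.ncard_diff hsub ((Set.finite_univ.image σ).subset hsub)
    have hrepM : ∀ m : ↥M, ∃ v : V, σ v = m.1 := by
      rintro ⟨m, hm⟩
      obtain ⟨v, -, hv⟩ := hm.1
      exact ⟨v, hv⟩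
    choose rep hrepc using hrepM
    set T := Set.range rep with hT
    have hσT : σ '' T = M := by
      apply Set.Subset.antisymm
      · rintro x ⟨v, ⟨m, rfl⟩, rfl⟩
        rw [hrepc]; exact m.2
      · intro m hm
        exact ⟨rep ⟨m, hm⟩, ⟨⟨m, hm⟩, rfl⟩, hrepc ⟨m, hm⟩⟩
    have hTcard : T.ncard ≤ q - p' := by
      calc T.ncard = (rep '' Set.univ).ncard := by rw [Set.image_univ]
        _ ≤ (Set.univ : Set ↥M).ncard := Set.ncard_image_le Set.finite_univ
        _ = Nat.card ↥M := Set.ncard_univ _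
        _ = M.ncard := Nat.card_coe_set_eq _
        _ = q - p' := hMcard
    have himg : σ '' (S ∪ T) = σ '' Set.univ := by
      rw [Set.image_union, hσT, hM, Set.union_diff_cancel hsub]
    have hmem : chromNum (G.induce (S ∪ T)) ∈ Q := ⟨S ∪ T, by rw [himg], rfl⟩
    have hgle : g ≤ chromNum (G.induce (S ∪ T)) := Nat.sInf_le hmem
    have hchain : chromNum (G.induce (S ∪ T)) ≤ chromNum (G.induce S) + T.ncard :=
      chromNum_induce_union_le G S T
    have : g ≤ chromNum (G.induce S) + (q - p') := by omega
    have hcast : (g : ℤ) ≤ (chromNum (G.induce S) : ℤ) + ((q : ℤ) - (p' : ℤ)) := by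
      have := this
      zify at this
      omega
    omega
  have hZne : Z.Nonempty := ⟨_, Set.univ, rfl⟩
  have hmemZ : (q : ℤ) - (g : ℤ) ∈ Z := ⟨X₀, by rw [← hX₀q, ← hX₀]⟩
  exact le_antisymm (csSup_le hZne hbound) (le_csSup ⟨_, hbound⟩ hmemZ)

end V

/-- For every finite simple graph `G` with at least one vertex,
`φ(G) = min { p - f_G(p) : χ(G) ≤ p ≤ |V(G)| }`. -/
theorem chromDisc_eq_min_fG {V : Type*} [Fintype V] [Nonempty V] (G : SimpleGraph V) :
    chromDisc G = sInf {z : ℤ | ∃ p : ℕ, chromNum G ≤ p ∧ p ≤ Fintype.card V ∧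
      z = (p : ℤ) - (fG G p : ℤ)} := by
  classical
  set n := Fintype.card V with hn
  set χ := chromNum G with hχ
  set A := {z : ℤ | ∃ p : ℕ, χ ≤ p ∧ p ≤ n ∧ z = (p : ℤ) - (fG G p : ℤ)} with hA
  set B := {z : ℤ | ∃ σ : V → ℕ, IsProperColoring G σ ∧ z = colDisc G σ} with hB
  -- for a proper σ let q σ be the number of colours used
  -- facts about the sets M_p appearing in fG
  have hMbdd : ∀ p : ℕ, ∀ m ∈ {m : ℕ | ∃ σ : V → ℕ, IsProperColoring G σ ∧
      (σ '' Set.univ).ncard = p ∧ m = minRainbowChrom G σ p}, m ≤ p := by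
    rintro p m ⟨σ, hσp, hσe, rfl⟩
    have h1 : chromNum (G.induce Set.univ) ∈ {c : ℕ | ∃ X : Set V,
        (σ '' X).ncard = p ∧ c = chromNum (G.induce X)} := ⟨Set.univ, hσe, rfl⟩
    have h2 : minRainbowChrom G σ p ≤ chromNum (G.induce Set.univ) := Nat.sInf_le h1
    have h3 : chromNum (G.induce Set.univ) ≤ (σ '' Set.univ).ncard :=
      chromNum_induce_le G Set.univ σ hσp
    omega
  -- every proper colouring gives: q σ ∈ [χ, n] and colDisc = q - minRainbow q
  have hq_ge : ∀ σ : V → ℕ, IsProperColoring G σ → χ ≤ (σ '' Set.univ).ncard :=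
    fun σ hσ => chromNum_le_ncard_image G σ hσ
  have hq_le : ∀ σ : V → ℕ, (σ '' Set.univ).ncard ≤ n := by
    intro σ
    calc (σ '' Set.univ).ncard ≤ (Set.univ : Set V).ncard :=
          Set.ncard_image_le Set.finite_univ
      _ = n := by rw [Set.ncard_univ, Nat.card_eq_fintype_card]
  -- A ⊆ B
  have hAB : A ⊆ B := by
    rintro z ⟨p, hpχ, hpn, rfl⟩
    set Mp := {m : ℕ | ∃ σ : V → ℕ, IsProperColoring G σ ∧ (σ '' Set.univ).ncard = p ∧
      m = minRainbowChrom G σ p} with hMp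
    have hMpne : Mp.Nonempty := by
      obtain ⟨σ, hσ, hσe⟩ := exists_proper_ncard_eq G hpχ hpn
      exact ⟨minRainbowChrom G σ p, σ, hσ, hσe, rfl⟩
    have hMpbdd : BddAbove Mp := ⟨p, fun m hm => hMbdd p m hm⟩
    have hmem : fG G p ∈ Mp := Nat.sSup_mem hMpne hMpbdd
    obtain ⟨σ, hσ, hσe, hσf⟩ := hmem
    refine ⟨σ, hσ, ?_⟩
    rw [colDisc_eq_sub G σ hσ, hσe, ← hσf]
  -- B bounded below by 0
  have hBbdd : ∀ z ∈ B, (0 : ℤ) ≤ z := by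
    rintro z ⟨σ, hσ, rfl⟩
    rw [colDisc_eq_sub G σ hσ]
    set q := (σ '' Set.univ).ncard with hqd
    have h1 : minRainbowChrom G σ q ≤ chromNum (G.induce Set.univ) :=
      Nat.sInf_le ⟨Set.univ, rfl, rfl⟩
    have h2 : chromNum (G.induce Set.univ) ≤ q := chromNum_induce_le G Set.univ σ hσ
    omega
  have hBne : B.Nonempty := by
    have hAne : A.Nonempty := by
      refine ⟨(χ : ℤ) - (fG G χ : ℤ), χ, le_refl _, ?_, rfl⟩
      exact chromNum_le_of_colorable G.colorable_of_fintype
    obtain ⟨z, hz⟩ := hAne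
    exact ⟨z, hAB hz⟩
  have hAne : A.Nonempty := by
    refine ⟨(χ : ℤ) - (fG G χ : ℤ), χ, le_refl _, ?_, rfl⟩
    exact chromNum_le_of_colorable G.colorable_of_fintype
  have hAbddBelow : BddBelow A := by
    refine ⟨0, ?_⟩
    rintro z ⟨p, hpχ, hpn, rfl⟩
    set Mp := {m : ℕ | ∃ σ : V → ℕ, IsProperColoring G σ ∧ (σ '' Set.univ).ncard = p ∧
      m = minRainbowChrom G σ p} with hMp
    have hMpne : Mp.Nonempty := by
      obtain ⟨σ, hσ, hσe⟩ := exists_proper_ncard_eq G hpχ hpn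
      exact ⟨minRainbowChrom G σ p, σ, hσ, hσe, rfl⟩
    have hfp : fG G p ≤ p := csSup_le hMpne (fun m hm => hMbdd p m hm)
    have : (fG G p : ℤ) ≤ (p : ℤ) := by exact_mod_cast hfp
    omega
  have hBbddBelow : BddBelow B := ⟨0, fun z hz => hBbdd z hz⟩
  apply le_antisymm
  · -- chromDisc ≤ sInf A : since A ⊆ B
    exact le_csInf hAne (fun z hz => csInf_le hBbddBelow (hAB hz))
  · -- sInf A ≤ chromDisc : each z ∈ B dominates some element of A
    refine le_csInf hBne ?_
    rintro z ⟨σ, hσ, rfl⟩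
    rw [colDisc_eq_sub G σ hσ]
    set q := (σ '' Set.univ).ncard with hqd
    have hqχ : χ ≤ q := hq_ge σ hσ
    have hqn : q ≤ n := hq_le σ
    have hmem : minRainbowChrom G σ q ∈ {m : ℕ | ∃ τ : V → ℕ, IsProperColoring G τ ∧
        (τ '' Set.univ).ncard = q ∧ m = minRainbowChrom G τ q} := ⟨σ, hσ, rfl, rfl⟩
    have hle : minRainbowChrom G σ q ≤ fG G q :=
      le_csSup ⟨q, fun m hm => hMbdd q m hm⟩ hmem
    have hAmem : (q : ℤ) - (fG G q : ℤ) ∈ A := ⟨q, hqχ, hqn, rfl⟩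
    have h1 : sInf A ≤ (q : ℤ) - (fG G q : ℤ) := csInf_le hAbddBelow hAmem
    have h2 : (fG G q : ℤ) ≥ (minRainbowChrom G σ q : ℤ) := by exact_mod_cast hle
    omega
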